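/- arXiv:1408.4664 — 2 statements merged into one kernel-verified Lean document; each statement's English description precedes it below -/
import Mathlib

section
/- Let X be a separable metric space, let ν be a Borel measure on X, let g : X → X be a homeomorphism, and let w : X → (0,∞) be continuous. Suppose that for every Borel set A ⊆ X one has ν(g(A)) ≤ (sup_{x∈A} w(x)) · ν(A). Then for every Borel set B ⊆ X, ν(g(B)) ≤ ∫_B w dν. -/
open MeasureTheory Filter Set Topology

/-- If `ν` is a Borel measure on a separable metric space `X`, `g : X → X` is a
homeomorphism, `w : X → (0,∞)` is continuous, and `ν(g(A)) ≤ (sup_A w) · ν(A)` for every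
Borel set `A`, then `ν(g(B)) ≤ ∫_B w dν` for every Borel set `B`. -/
theorem stmt_7 {X : Type*} [MetricSpace X] [TopologicalSpace.SeparableSpace X]
    [MeasurableSpace X] [BorelSpace X]
    (ν : Measure X) (g : X ≃ₜ X) (w : X → ℝ)
    (hw_pos : ∀ x, 0 < w x) (hw_cont : Continuous w)
    (h : ∀ A : Set X, MeasurableSet A →
      ν (g '' A) ≤ (⨆ x ∈ A, ENNReal.ofReal (w x)) * ν A) :
    ∀ B : Set X, MeasurableSet B →
      ν (g '' B) ≤ ∫⁻ x in B, ENNReal.ofReal (w x) ∂ν := by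
  intro B hB
  set I : ENNReal := ∫⁻ x in B, ENNReal.ofReal (w x) ∂ν with hI
  have key : ∀ c : ℝ, 1 < c → ν (g '' B) ≤ ENNReal.ofReal c * I := by
    intro c hc
    have hc0 : (0:ℝ) < c := by linarith
    set A : ℤ → Set X := fun n => B ∩ w ⁻¹' (Set.Ico (c ^ n) (c ^ (n+1))) with hA
    have hA_meas : ∀ n, MeasurableSet (A n) :=
      fun n => hB.inter (hw_cont.measurable measurableSet_Ico)
    have hcov : B = ⋃ n, A n := by
      ext x
      constructor
      · intro hx
        refine Set.mem_iUnion.2 ⟨⌊Real.logb c (w x)⌋, hx, ?_, ?_⟩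
        · have h1 : (c:ℝ) ^ ((⌊Real.logb c (w x)⌋ : ℝ)) ≤ c ^ (Real.logb c (w x)) := by
            apply Real.rpow_le_rpow_left_iff hc |>.2
            exact Int.floor_le _
          rw [Real.rpow_logb hc0 (ne_of_gt hc) (hw_pos x)] at h1
          rwa [Real.rpow_intCast] at h1
        · have h1 : (c:ℝ) ^ (Real.logb c (w x)) < c ^ ((⌊Real.logb c (w x)⌋ + 1 : ℤ) : ℝ) := by
            apply Real.rpow_lt_rpow_left_iff hc |>.2
            push_cast
            exact Int.lt_floor_add_one _
          rw [Real.rpow_logb hc0 (ne_of_gt hc) (hw_pos x)] at h1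
          rwa [Real.rpow_intCast] at h1
      · intro hx
        obtain ⟨n, hn, _⟩ := Set.mem_iUnion.1 hx
        exact hn
    have hdisj : Pairwise (Function.onFun Disjoint A) := by
      intro m n hmn
      rw [Function.onFun, Set.disjoint_left]
      rintro x ⟨-, hm1, hm2⟩ ⟨-, hn1, hn2⟩
      rcases lt_or_gt_of_ne hmn with hlt | hlt
      · have : (c:ℝ) ^ (m+1) ≤ c ^ n := zpow_le_zpow_right₀ hc.le (by omega)
        linarith
      · have : (c:ℝ) ^ (n+1) ≤ c ^ m := zpow_le_zpow_right₀ hc.le (by omega)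
        linarith
    have step : ∀ n : ℤ, ν (g '' A n) ≤
        ENNReal.ofReal c * ∫⁻ x in A n, ENNReal.ofReal (w x) ∂ν := by
      intro n
      have h1 : ν (g '' A n) ≤ ENNReal.ofReal (c ^ (n+1)) * ν (A n) := by
        refine (h (A n) (hA_meas n)).trans (mul_le_mul_left ?_ _)
        refine iSup₂_le fun x hx => ENNReal.ofReal_le_ofReal hx.2.2.le
      have h2 : ENNReal.ofReal (c ^ (n+1)) * ν (A n)
          = ENNReal.ofReal c * (ENNReal.ofReal (c ^ n) * ν (A n)) := by
        rw [zpow_add_one₀ (ne_of_gt hc0), ENNReal.ofReal_mul (by positivity), mul_assoc]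
        ring
      have h3 : ENNReal.ofReal (c ^ n) * ν (A n) ≤ ∫⁻ x in A n, ENNReal.ofReal (w x) ∂ν := by
        rw [← setLIntegral_const (A n) (ENNReal.ofReal (c ^ n))]
        refine setLIntegral_mono (ENNReal.measurable_ofReal.comp hw_cont.measurable) fun x hx => ?_
        exact ENNReal.ofReal_le_ofReal hx.2.1
      calc ν (g '' A n) ≤ ENNReal.ofReal (c ^ (n+1)) * ν (A n) := h1
        _ = ENNReal.ofReal c * (ENNReal.ofReal (c ^ n) * ν (A n)) := h2
        _ ≤ ENNReal.ofReal c * ∫⁻ x in A n, ENNReal.ofReal (w x) ∂ν :=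
            mul_le_mul_right h3 _
    calc ν (g '' B) = ν (⋃ n, g '' A n) := by rw [hcov, Set.image_iUnion]
      _ ≤ ∑' n, ν (g '' A n) := measure_iUnion_le _
      _ ≤ ∑' n, ENNReal.ofReal c * ∫⁻ x in A n, ENNReal.ofReal (w x) ∂ν :=
          ENNReal.tsum_le_tsum step
      _ = ENNReal.ofReal c * ∑' n, ∫⁻ x in A n, ENNReal.ofReal (w x) ∂ν :=
          ENNReal.tsum_mul_left
      _ = ENNReal.ofReal c * I := by
          rw [hI, hcov, lintegral_iUnion hA_meas hdisj]
  -- take c → 1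
  have htend : Tendsto (fun k : ℕ => ENNReal.ofReal (1 + ((k:ℝ)+1)⁻¹) * I) atTop (𝓝 (1 * I)) := by
    have h1 : Tendsto (fun k : ℕ => ENNReal.ofReal (1 + ((k:ℝ)+1)⁻¹)) atTop (𝓝 1) := by
      have : Tendsto (fun k : ℕ => (1 + ((k:ℝ)+1)⁻¹)) atTop (𝓝 1) := by
        have := tendsto_one_div_add_atTop_nhds_zero_nat (𝕜 := ℝ)
        simpa [one_div] using (tendsto_const_nhds.add this)
      simpa [Function.comp_def] using (ENNReal.continuous_ofReal.tendsto 1).comp this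
    exact ENNReal.Tendsto.mul_const h1 (Or.inl one_ne_zero)
  rw [one_mul] at htend
  refine ge_of_tendsto' htend fun k => key _ ?_
  have : (0:ℝ) < ((k:ℝ)+1)⁻¹ := by positivity
  linarith
end

section
/- Let δ > 0 and k > 0 with k ≠ δ and Δ := 2δ − k > 0. Let Ψ : ℝ → ℝ be differentiable and monotonic on [T,∞) for some T, with Ψ'(t) → 0 as t → ∞. Define θ(r) = r · exp(Ψ(log(1/r))/(k−δ)) for r ∈ (0, e^{−T}). Then there exists r₀ ∈ (0, e^{−T}) such that θ is strictly increasing on (0, r₀) with θ(r) → 0 as r → 0+; moreover, for any α > 0 and λ ∈ (0,1), the series Σ_n (θ⁻¹(λⁿ/α)/λⁿ)^Δ (summed over all sufficiently large n, for which λⁿ/α lies in the image θ((0,r₀))) converges if and only if the series Σ_{t=1}^∞ exp(−(Δ/(k−δ))·Ψ(t)) converges. -/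
open Filter Set

lemma lemA {f : ℕ → ℝ} (hf0 : ∀ n, 0 ≤ f n) (hf : Summable f) (q : ℕ) (hq : q ≠ 0) :
    Summable fun n => f (n / q) := by
  haveI : NeZero q := ⟨hq⟩
  have h1 : Summable fun p : ℕ × Fin q => f p.1 := by
    refine (summable_prod_of_nonneg fun p => hf0 p.1).2 ⟨fun a => ?_, ?_⟩
    · exact Summable.of_finite
    · simpa [tsum_fintype, Finset.sum_const, nsmul_eq_mul] using hf.mul_left (q : ℝ)
  have h2 := ((Nat.divModEquiv q).summable_iff (f := fun p : ℕ × Fin q => f p.1)).2 h1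
  exact h2

lemma lemB {g : ℝ → ℝ} {M : ℝ} (hg0 : ∀ x, 0 ≤ g x)
    (hganti : AntitoneOn g (Set.Ici M))
    (u v : ℕ → ℝ) {d K : ℝ} (hd : 0 < d)
    (hu : ∀ n, M ≤ u n) (hv : ∀ n, M ≤ v n)
    (hugap : ∀ n, u n + d ≤ u (n + 1))
    (hvgap : ∀ n, v (n + 1) ≤ v n + K)
    (hsum : Summable fun n => g (v n)) :
    Summable fun n => g (u n) := by
  have hu_lin : ∀ n : ℕ, u 0 + n * d ≤ u n := by
    intro n; induction n with
    | zero => simp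
    | succ n ih => push_cast; nlinarith [hugap n]
  have hv_lin : ∀ n : ℕ, v n ≤ v 0 + n * K := by
    intro n; induction n with
    | zero => simp
    | succ n ih => push_cast; nlinarith [hvgap n]
  set q : ℕ := max 1 ⌈2 * K / d⌉₊ with hqdef
  have hq0 : q ≠ 0 := by positivity
  have hqR : (0:ℝ) < q := by
    have : 0 < q := Nat.pos_of_ne_zero hq0
    exact_mod_cast this
  have hKq : ∀ n : ℕ, ((n / q : ℕ) : ℝ) * K ≤ n * (d / 2) := by
    intro n
    rcases le_or_gt K 0 with hK | hK
    · have h1 : (0:ℝ) ≤ ((n / q : ℕ) : ℝ) := Nat.cast_nonneg _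
      have h2 : (0:ℝ) ≤ (n:ℝ) * (d / 2) := by positivity
      nlinarith
    · have h1 : ((n / q : ℕ) : ℝ) ≤ (n : ℝ) / q := Nat.cast_div_le
      have h2 : (2 * K / d : ℝ) ≤ q := by
        calc (2 * K / d : ℝ) ≤ ⌈2 * K / d⌉₊ := Nat.le_ceil _
        _ ≤ q := by exact_mod_cast Nat.cast_le.2 (le_max_right 1 _)
      have h3 : K / q ≤ d / 2 := by
        rw [div_le_div_iff₀ hqR two_pos]
        have := (div_le_iff₀ hd).1 h2
        nlinarith
      calc ((n / q : ℕ) : ℝ) * K ≤ (n : ℝ) / q * K := by nlinarith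
      _ = (n : ℝ) * (K / q) := by ring
      _ ≤ (n : ℝ) * (d / 2) := by
          apply mul_le_mul_of_nonneg_left h3 (Nat.cast_nonneg n)
  set n₁ : ℕ := ⌈2 * (v 0 - u 0) / d⌉₊ with hn1def
  have key : ∀ n : ℕ, n₁ ≤ n → v (n / q) ≤ u n := by
    intro n hn
    have c1 : v (n / q) ≤ v 0 + ((n / q : ℕ) : ℝ) * K := hv_lin _
    have c3 : 2 * (v 0 - u 0) / d ≤ (n : ℝ) :=
      le_trans (Nat.le_ceil _) (by exact_mod_cast Nat.cast_le.2 hn)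
    have c4 : v 0 + (n : ℝ) * (d / 2) ≤ u 0 + n * d := by
      have := (div_le_iff₀ hd).1 c3
      nlinarith
    have := hKq n
    linarith [hu_lin n]
  have hA : Summable fun n => g (v (n / q)) := lemA (fun n => hg0 _) hsum q hq0
  have hA' : Summable fun n => g (v ((n + n₁) / q)) :=
    (summable_nat_add_iff n₁).2 hA
  have hcomp : Summable fun n => g (u (n + n₁)) := by
    refine Summable.of_nonneg_of_le (fun n => hg0 _) (fun n => ?_) hA'
    exact hganti (hv _) (hu _) (key _ (Nat.le_add_left _ _))
  exact (summable_nat_add_iff n₁).1 hcomp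

/-- Let `δ, k > 0` with `k ≠ δ` and `Δ = 2δ - k > 0`, and let `Ψ` be differentiable and
monotonic on `[T,∞)` with `Ψ'(t) → 0`. Set `θ(r) = r · exp(Ψ(log(1/r))/(k-δ))` for
`r ∈ (0, e^{-T})`. Then there is `r₀ ∈ (0, e^{-T})` such that `θ` is strictly increasing on
`(0, r₀)` with `θ(r) → 0` as `r → 0+`; moreover, for every `α > 0` and `l ∈ (0,1)`, the
series `Σ_n (θ⁻¹(lⁿ/α)/lⁿ)^Δ` (over all sufficiently large `n`, for which `lⁿ/α` is in the
image of `θ` on `(0,r₀)`) converges if and only if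
`Σ_{t=1}^∞ exp(-(Δ/(k-δ))·Ψ(t))` converges. -/
theorem stmt_9 (δ k : ℝ) (hδ : 0 < δ) (hk : 0 < k) (hkδ : k ≠ δ) (hΔ : 0 < 2 * δ - k)
    (T : ℝ) (Ψ Ψ' : ℝ → ℝ)
    (hdiff : ∀ t ∈ Set.Ici T, HasDerivWithinAt Ψ (Ψ' t) (Set.Ici T) t)
    (hmono : MonotoneOn Ψ (Set.Ici T) ∨ AntitoneOn Ψ (Set.Ici T))
    (hlim : Filter.Tendsto Ψ' Filter.atTop (nhds 0))
    (θ : ℝ → ℝ)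
    (hθ : ∀ r ∈ Set.Ioo (0:ℝ) (Real.exp (-T)),
      θ r = r * Real.exp (Ψ (Real.log (1 / r)) / (k - δ))) :
    ∃ r₀ ∈ Set.Ioo (0:ℝ) (Real.exp (-T)),
      StrictMonoOn θ (Set.Ioo 0 r₀) ∧
      Filter.Tendsto θ (nhdsWithin 0 (Set.Ioi 0)) (nhds 0) ∧
      ∀ α : ℝ, 0 < α → ∀ l : ℝ, l ∈ Set.Ioo (0:ℝ) 1 →
        ∃ N : ℕ, (∀ n : ℕ, N ≤ n → l ^ n / α ∈ θ '' Set.Ioo 0 r₀) ∧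
          (Summable (fun n : ℕ =>
              (Function.invFunOn θ (Set.Ioo 0 r₀) (l ^ (n + N) / α) / l ^ (n + N))
                ^ (2 * δ - k)) ↔
            Summable (fun t : ℕ =>
              Real.exp (-((2 * δ - k) / (k - δ)) * Ψ (t + 1)))) := by
  have hc : k - δ ≠ 0 := sub_ne_zero.2 hkδ
  set c : ℝ := k - δ with hcdef
  -- get T₁' where |Ψ'| ≤ |c|/2
  have hceps : (0:ℝ) < |c| / 2 := by
    have : 0 < |c| := abs_pos.2 hc
    linarith
  obtain ⟨T₁', hT₁'⟩ : ∃ x : ℝ, ∀ t ≥ x, |Ψ' t| ≤ |c| / 2 := by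
    have h := hlim.eventually (eventually_abs_sub_lt 0 hceps)
    simp only [sub_zero] at h
    obtain ⟨x, hx⟩ := h.exists_forall_of_atTop
    exact ⟨x, fun t ht => (hx t ht).le⟩
  set T₁ : ℝ := max T T₁' with hT₁def
  have hTT₁ : T ≤ T₁ := le_max_left _ _
  set T₀ : ℝ := T₁ + 1 with hT₀def
  have hT₁T₀ : T₁ < T₀ := by linarith
  set r₀ : ℝ := Real.exp (-T₀) with hr₀def
  have hr₀pos : 0 < r₀ := Real.exp_pos _
  have hr₀lt : r₀ < Real.exp (-T) := by
    apply Real.exp_lt_exp.2; linarith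
  set φ : ℝ → ℝ := fun s => s - Ψ s / c with hφdef
  -- continuity of Ψ and φ on Ici T
  have hΨc : ContinuousOn Ψ (Set.Ici T) := fun t ht => (hdiff t ht).continuousWithinAt
  have hφc : ContinuousOn φ (Set.Ici T) := continuousOn_id.sub (hΨc.div_const c)
  -- derivative bound facts
  have hderiv : ∀ x ∈ Set.Ioi T₁, HasDerivAt Ψ (Ψ' x) x := by
    intro x hx
    have hTx : T < x := lt_of_le_of_lt hTT₁ hx
    exact (hdiff x hTx.le).hasDerivAt (Ici_mem_nhds hTx)
  have hΨ'bd : ∀ x ∈ Set.Ioi T₁, |Ψ' x / c| ≤ 1 / 2 := by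
    intro x hx
    have h1 : |Ψ' x| ≤ |c| / 2 := hT₁' x (le_of_lt (lt_of_le_of_lt (le_max_right T T₁') hx))
    rw [abs_div, div_le_div_iff₀ (abs_pos.2 hc) two_pos]
    have h2 : (0:ℝ) < |c| := abs_pos.2 hc
    linarith
  have mono1 : MonotoneOn (fun s => φ s - s / 2) (Set.Ici T₁) := by
    apply monotoneOn_of_hasDerivWithinAt_nonneg (convex_Ici T₁)
      (f' := fun x => 1 - Ψ' x / c - 1 / 2)
    · exact ((hφc.mono (Ici_subset_Ici.2 hTT₁)).sub
        ((continuous_id.div_const 2).continuousOn))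
    · intro x hx
      rw [interior_Ici] at hx
      exact (((hasDerivAt_id x).sub ((hderiv x hx).div_const c)).sub
        ((hasDerivAt_id x).div_const 2)).hasDerivWithinAt
    · intro x hx
      rw [interior_Ici] at hx
      have := hΨ'bd x hx
      have h2 : Ψ' x / c ≤ 1 / 2 := (abs_le.1 this).2
      linarith
  have mono2 : MonotoneOn (fun s => 3 / 2 * s - φ s) (Set.Ici T₁) := by
    apply monotoneOn_of_hasDerivWithinAt_nonneg (convex_Ici T₁)
      (f' := fun x => 3 / 2 * 1 - (1 - Ψ' x / c))
    · exact (continuousOn_const.mul continuousOn_id).sub (hφc.mono (Ici_subset_Ici.2 hTT₁))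
    · intro x hx
      rw [interior_Ici] at hx
      exact ((hasDerivAt_id x).const_mul (3/2 : ℝ)).sub
        ((hasDerivAt_id x).sub ((hderiv x hx).div_const c)) |>.hasDerivWithinAt
    · intro x hx
      rw [interior_Ici] at hx
      have := hΨ'bd x hx
      have h2 : -(1/2 : ℝ) ≤ Ψ' x / c := (abs_le.1 this).1
      linarith
  have hφlb : ∀ x y, T₁ ≤ x → x ≤ y → (y - x) / 2 ≤ φ y - φ x := by
    intro x y hx hxy
    have := mono1 (mem_Ici.2 hx) (mem_Ici.2 (hx.trans hxy)) hxy
    simp only at this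
    linarith
  have hφub : ∀ x y, T₁ ≤ x → x ≤ y → φ y - φ x ≤ 3 / 2 * (y - x) := by
    intro x y hx hxy
    have := mono2 (mem_Ici.2 hx) (mem_Ici.2 (hx.trans hxy)) hxy
    simp only at this
    linarith
  -- θ in terms of φ
  have hθe : ∀ r ∈ Set.Ioo (0:ℝ) (Real.exp (-T)), θ r = Real.exp (-φ (-Real.log r)) := by
    intro r hr
    rw [hθ r hr]
    have : Real.exp (-φ (-Real.log r)) =
        Real.exp (Real.log r) * Real.exp (Ψ (-Real.log r) / c) := by
      rw [← Real.exp_add]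
      congr 1
      simp only [hφdef]
      ring
    rw [one_div, Real.log_inv, this, Real.exp_log hr.1]
  clear_value c T₁ T₀ r₀ φ
  have hsubset : Set.Ioo (0:ℝ) r₀ ⊆ Set.Ioo 0 (Real.exp (-T)) := by
    intro x hx; exact ⟨hx.1, hx.2.trans hr₀lt⟩
  have hsT₀ : ∀ r ∈ Set.Ioo (0:ℝ) r₀, T₀ < -Real.log r := by
    intro r hr
    have := Real.log_lt_log hr.1 hr.2
    rw [hr₀def, Real.log_exp] at this
    linarith
  -- strict monotonicity
  have hSM : StrictMonoOn θ (Set.Ioo 0 r₀) := by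
    intro r₁ h₁ r₂ h₂ hlt
    rw [hθe r₁ (hsubset h₁), hθe r₂ (hsubset h₂)]
    apply Real.exp_lt_exp.2
    have hs1 := hsT₀ r₁ h₁
    have hs2 := hsT₀ r₂ h₂
    have hs21 : -Real.log r₂ < -Real.log r₁ := by
      have := Real.log_lt_log h₁.1 hlt
      linarith
    have h5 := hφlb (-Real.log r₂) (-Real.log r₁) (by linarith) hs21.le
    have h6 : 0 < φ (-Real.log r₁) - φ (-Real.log r₂) := lt_of_lt_of_le (by linarith) h5
    linarith
  -- tendsto 0
  have hbound : ∀ r ∈ Set.Ioo (0:ℝ) r₀,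
      θ r ≤ Real.exp (-φ T₁ + T₁ / 2) * Real.exp (Real.log r / 2) := by
    intro r hr
    have hs := hsT₀ r hr
    rw [hθe r (hsubset hr), ← Real.exp_add]
    apply Real.exp_le_exp.2
    have := hφlb T₁ (-Real.log r) le_rfl (by linarith)
    linarith
  have htend : Filter.Tendsto θ (nhdsWithin 0 (Set.Ioi 0)) (nhds 0) := by
    have hino : ∀ᶠ r in nhdsWithin (0:ℝ) (Set.Ioi 0), r ∈ Set.Ioo (0:ℝ) r₀ := by
      have h1 : ∀ᶠ r in nhdsWithin (0:ℝ) (Set.Ioi 0), r ∈ Set.Ioi (0:ℝ) :=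
        eventually_mem_nhdsWithin
      have h2 : ∀ᶠ r in nhdsWithin (0:ℝ) (Set.Ioi 0), r < r₀ := by
        apply eventually_nhdsWithin_of_eventually_nhds
        exact Filter.Tendsto.eventually_lt_const hr₀pos tendsto_id
      filter_upwards [h1, h2] with r hr1 hr2
      exact ⟨hr1, hr2⟩
    have hB : Filter.Tendsto (fun r => Real.exp (-φ T₁ + T₁ / 2) * Real.exp (Real.log r / 2))
        (nhdsWithin 0 (Set.Ioi 0)) (nhds 0) := by
      have h1 : Filter.Tendsto (fun r : ℝ => Real.log r / 2) (nhdsWithin 0 (Set.Ioi 0)) atBot :=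
        (Real.tendsto_log_nhdsGT_zero).atBot_div_const two_pos
      have h2 := Real.tendsto_exp_atBot.comp h1
      have := h2.const_mul (Real.exp (-φ T₁ + T₁ / 2))
      simpa using this
    apply squeeze_zero'
    · filter_upwards [hino] with r hr
      rw [hθe r (hsubset hr)]
      exact (Real.exp_pos _).le
    · filter_upwards [hino] with r hr
      exact hbound r hr
    · exact hB
  refine ⟨r₀, ⟨hr₀pos, hr₀lt⟩, hSM, htend, ?_⟩
  intro α hα l hl
  have hl0 := hl.1
  have hl1 := hl.2
  set L : ℝ := -Real.log l with hLdef
  have hL : 0 < L := by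
    have := Real.log_neg hl0 hl1
    rw [hLdef]; linarith
  clear_value L
  set b : ℝ := r₀ / 2 with hbdef
  have hbmem : b ∈ Set.Ioo (0:ℝ) r₀ := ⟨by positivity, by rw [hbdef]; linarith⟩
  have hθb : 0 < θ b := by
    rw [hθe b (hsubset hbmem)]; exact Real.exp_pos _
  clear_value b
  have himg : ∀ y : ℝ, 0 < y → y < θ b → y ∈ θ '' Set.Ioo 0 r₀ := by
    intro y hy hyb
    have hev : ∀ᶠ x in nhdsWithin (0:ℝ) (Set.Ioi 0), θ x < y ∧ x ∈ Set.Ioo (0:ℝ) b := by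
      have e1 := htend.eventually_lt_const hy
      have e2 : ∀ᶠ x in nhdsWithin (0:ℝ) (Set.Ioi 0), x ∈ Set.Ioi (0:ℝ) :=
        eventually_mem_nhdsWithin
      have e3 : ∀ᶠ x in nhdsWithin (0:ℝ) (Set.Ioi 0), x < b := by
        apply eventually_nhdsWithin_of_eventually_nhds
        exact Filter.Tendsto.eventually_lt_const hbmem.1 tendsto_id
      filter_upwards [e1, e2, e3] with x h1 h2 h3
      exact ⟨h1, h2, h3⟩
    obtain ⟨a, ha1, ha2⟩ := hev.exists
    have hIcc : Set.Icc a b ⊆ Set.Ioo (0:ℝ) r₀ := fun x hx =>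
      ⟨lt_of_lt_of_le ha2.1 hx.1, lt_of_le_of_lt hx.2 hbmem.2⟩
    have hmaps : Set.MapsTo (fun r : ℝ => -Real.log r) (Set.Icc a b) (Set.Ici T) := by
      intro x hx
      have := hsT₀ x (hIcc hx)
      exact mem_Ici.2 (by show T ≤ -Real.log x; linarith)
    have hlogc : ContinuousOn (fun r : ℝ => -Real.log r) (Set.Icc a b) := by
      apply ContinuousOn.neg
      apply Real.continuousOn_log.mono
      intro x hx
      exact ne_of_gt (hIcc hx).1
    have contθ : ContinuousOn θ (Set.Icc a b) := by
      refine ContinuousOn.congr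
        (f := fun r : ℝ => Real.exp (-φ (-Real.log r))) ?_ ?_
      · exact Real.continuous_exp.comp_continuousOn ((hφc.comp hlogc hmaps).neg)
      · intro x hx; exact hθe x (hsubset (hIcc hx))
    obtain ⟨x, hx, hxy⟩ := intermediate_value_Icc ha2.2.le contθ ⟨ha1.le, hyb.le⟩
    exact ⟨x, hIcc hx, hxy⟩
  have hpow : Filter.Tendsto (fun n : ℕ => l ^ n / α) atTop (nhds 0) := by
    have h := tendsto_pow_atTop_nhds_zero_of_lt_one hl0.le hl1
    simpa using h.div_const α
  obtain ⟨N, hN⟩ := (hpow.eventually_lt_const hθb).exists_forall_of_atTop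
  refine ⟨N, fun n hn => himg _ (by positivity) (hN n hn), ?_⟩
  have hex : ∀ n : ℕ, ∃ x ∈ Set.Ioo (0:ℝ) r₀, θ x = l ^ (n + N) / α := by
    intro n
    obtain ⟨x, hx, hxe⟩ := himg (l ^ (n + N) / α) (by positivity)
      (hN (n + N) (Nat.le_add_left _ _))
    exact ⟨x, hx, hxe⟩
  set rr : ℕ → ℝ := fun n => Function.invFunOn θ (Set.Ioo 0 r₀) (l ^ (n + N) / α)
    with hrrdef
  have hrrmem : ∀ n, rr n ∈ Set.Ioo (0:ℝ) r₀ := fun n => Function.invFunOn_mem (hex n)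
  have hrreq : ∀ n, θ (rr n) = l ^ (n + N) / α := fun n => Function.invFunOn_eq (hex n)
  set u : ℕ → ℝ := fun n => -Real.log (rr n) with hudef
  have huT₀ : ∀ n, T₀ < u n := fun n => hsT₀ _ (hrrmem n)
  have hexpφ : ∀ n, Real.exp (-φ (u n)) = l ^ (n + N) / α := by
    intro n
    exact (hθe (rr n) (hsubset (hrrmem n))).symm.trans (hrreq n)
  have hφu : ∀ n : ℕ, φ (u n) = Real.log α - ((n : ℝ) + N) * Real.log l := by
    intro n
    have h2 : -φ (u n) = Real.log (l ^ (n + N) / α) := by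
      rw [← hexpφ n, Real.log_exp]
    rw [Real.log_div (by positivity) (ne_of_gt hα), Real.log_pow] at h2
    push_cast at h2
    linarith
  clear_value u rr
  have hgapL : ∀ n : ℕ, φ (u (n + 1)) - φ (u n) = L := by
    intro n
    rw [hφu (n + 1), hφu n, hLdef]
    push_cast
    ring
  have hult : ∀ n, u n < u (n + 1) := by
    intro n
    by_contra hcon
    push_neg at hcon
    have h1 := hφlb (u (n + 1)) (u n) (by linarith [huT₀ (n + 1)]) hcon
    have h2 := hgapL n
    linarith
  have hgap_lo : ∀ n : ℕ, u n + 2 / 3 * L ≤ u (n + 1) := by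
    intro n
    have h1 := hφub (u n) (u (n + 1)) (by linarith [huT₀ n]) (hult n).le
    have h2 := hgapL n
    linarith
  have hgap_hi : ∀ n : ℕ, u (n + 1) ≤ u n + 2 * L := by
    intro n
    have h1 := hφlb (u n) (u (n + 1)) (by linarith [huT₀ n]) (hult n).le
    have h2 := hgapL n
    linarith
  set g : ℝ → ℝ := fun x => Real.exp (-((2 * δ - k) / c) * Ψ x) with hgdef
  clear_value g
  have hg0 : ∀ x : ℝ, 0 ≤ g x := fun x => by simp only [hgdef]; positivity
  have hterm : ∀ n : ℕ, (rr n / l ^ (n + N)) ^ (2 * δ - k)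
      = (1 / α) ^ (2 * δ - k) * g (u n) := by
    intro n
    have hrpos := (hrrmem n).1
    have hrr : rr n = Real.exp (-(u n)) := by
      simp only [hudef, neg_neg]; rw [Real.exp_log hrpos]
    have hlp : α * Real.exp (-φ (u n)) = l ^ (n + N) := by
      rw [hexpφ n]; field_simp
    have h1 : rr n / l ^ (n + N) = 1 / α * Real.exp (-Ψ (u n) / c) := by
      rw [hrr, ← hlp]
      rw [show -Ψ (u n) / c = -(u n) - (-φ (u n)) by simp only [hφdef]; ring,
        Real.exp_sub]
      field_simp
    rw [h1, Real.mul_rpow (by positivity) (Real.exp_pos _).le]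
    congr 1
    rw [← Real.exp_mul]
    simp only [hgdef]
    congr 1
    ring
  have hC : (0:ℝ) < (1 / α) ^ (2 * δ - k) := Real.rpow_pos_of_pos (by positivity) _
  have hfun : (fun n : ℕ =>
      (Function.invFunOn θ (Set.Ioo 0 r₀) (l ^ (n + N) / α) / l ^ (n + N))
        ^ (2 * δ - k))
      = fun n : ℕ => (1 / α) ^ (2 * δ - k) * g (u n) := by
    funext n
    have h := hterm n
    simp only [hrrdef] at h
    exact h
  have hfun2 : (fun t : ℕ => Real.exp (-((2 * δ - k) / c) * Ψ (t + 1)))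
      = fun t : ℕ => g ((t : ℝ) + 1) := by
    funext t; simp only [hgdef]
  rw [hfun, hfun2]
  set T₂ : ℕ := ⌈T₀⌉₊ with hT₂def
  have hT₂ : T₀ ≤ (T₂ : ℝ) := Nat.le_ceil _
  clear_value T₂
  set v : ℕ → ℝ := fun t => (t : ℝ) + ((T₂ : ℝ) + 1) with hvdef
  clear_value v
  have hiff2 : Summable (fun t : ℕ => g ((t : ℝ) + 1)) ↔
      Summable (fun t : ℕ => g (v t)) := by
    constructor
    · intro hs
      have h2 := (summable_nat_add_iff T₂).2 hs
      refine h2.congr fun t => ?_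
      simp only [hvdef]
      congr 1
      push_cast
      ring
    · intro hs
      have h2 : Summable (fun t : ℕ => g (((t + T₂ : ℕ) : ℝ) + 1)) := by
        refine hs.congr fun t => ?_
        simp only [hvdef]
        congr 1
        push_cast
        ring
      exact (summable_nat_add_iff T₂).1 h2
  have hvT : ∀ t : ℕ, T ≤ v t := by
    intro t
    simp only [hvdef]
    have h0 : (0:ℝ) ≤ (t:ℝ) := Nat.cast_nonneg t
    linarith
  have huT : ∀ n, T ≤ u n := fun n => by linarith [huT₀ n]
  have hvgap1 : ∀ t : ℕ, v t + 1 ≤ v (t + 1) := by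
    intro t; simp only [hvdef]; push_cast; linarith
  have hvgap2 : ∀ t : ℕ, v (t + 1) ≤ v t + 1 := by
    intro t; simp only [hvdef]; push_cast; linarith
  have hcases : AntitoneOn g (Set.Ici T) ∨ MonotoneOn g (Set.Ici T) := by
    rcases hmono with hm | hm
    · rcases le_or_gt 0 ((2 * δ - k) / c) with hsgn | hsgn
      · left; intro x hx y hy hxy
        simp only [hgdef]
        apply Real.exp_le_exp.2
        exact mul_le_mul_of_nonpos_left (hm hx hy hxy) (neg_nonpos.2 hsgn)
      · right; intro x hx y hy hxy
        simp only [hgdef]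
        apply Real.exp_le_exp.2
        exact mul_le_mul_of_nonneg_left (hm hx hy hxy) (neg_nonneg.2 hsgn.le)
    · rcases le_or_gt 0 ((2 * δ - k) / c) with hsgn | hsgn
      · right; intro x hx y hy hxy
        simp only [hgdef]
        apply Real.exp_le_exp.2
        exact mul_le_mul_of_nonpos_left (hm hx hy hxy) (neg_nonpos.2 hsgn)
      · left; intro x hx y hy hxy
        simp only [hgdef]
        apply Real.exp_le_exp.2
        exact mul_le_mul_of_nonneg_left (hm hx hy hxy) (neg_nonneg.2 hsgn.le)
  rcases hcases with hganti | hgmono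
  · rw [summable_mul_left_iff (ne_of_gt hC), hiff2]
    constructor
    · intro hs
      exact lemB hg0 hganti v u one_pos hvT huT hvgap1 hgap_hi hs
    · intro hs
      exact lemB hg0 hganti u v (by linarith : (0:ℝ) < 2 / 3 * L) huT hvT hgap_lo
        hvgap2 hs
  · have hgT₀pos : 0 < g T₀ := by rw [hgdef]; positivity
    have hT₀mem : T₀ ∈ Set.Ici T := mem_Ici.2 (by linarith)
    have notL : ¬ Summable (fun n : ℕ => (1 / α) ^ (2 * δ - k) * g (u n)) := by
      intro hs
      have h0 := hs.tendsto_atTop_zero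
      have hev := h0.eventually_lt_const (show (0:ℝ) < (1 / α) ^ (2 * δ - k) * g T₀
        from mul_pos hC hgT₀pos)
      obtain ⟨n, hn⟩ := hev.exists
      have hle : g T₀ ≤ g (u n) :=
        hgmono hT₀mem (mem_Ici.2 (huT n)) (huT₀ n).le
      nlinarith [hC]
    have notR : ¬ Summable (fun t : ℕ => g ((t : ℝ) + 1)) := by
      intro hs
      have h0 := hs.tendsto_atTop_zero
      have hev := h0.eventually_lt_const hgT₀pos
      have hev2 : ∀ᶠ t : ℕ in atTop, T₀ ≤ (t : ℝ) + 1 := by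
        rw [eventually_atTop]
        exact ⟨T₂, fun t ht => by
          have h3 : (T₂ : ℝ) ≤ (t : ℝ) := Nat.cast_le.2 ht
          linarith⟩
      obtain ⟨t, h1, h2⟩ := (hev.and hev2).exists
      have hle : g T₀ ≤ g ((t : ℝ) + 1) :=
        hgmono hT₀mem (mem_Ici.2 (by linarith)) h2
      linarith
    exact iff_of_false notL notR
end
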